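/- Let α, β ∈ ℝ and set a := e^{iα}/√2, b := e^{iβ}/√2, p := (0, a, b, 0) ∈ ℂ⁴, w₊ := (0, a, b, 0), w₋ := (0, a, −b, 0), and let e₁ = (1,0,0,0), e₂ = (0,1,0,0), e₃ = (0,0,1,0), e₄ = (0,0,0,1) be the canonical basis. Define the self-adjoint operators E_{AB} := e₁e₁* − e₂e₂* − e₃e₃* + e₄e₄*, E_{AB'} := w₊w₊* − w₋w₋* − e₁e₁* + e₄e₄*, E_{A'B} := w₊w₊* − e₁e₁* − w₋w₋* + e₄e₄*, and E_{A'B'} := w₊w₊* − e₁e₁* − e₄e₄* + w₋w₋*. Then p is a unit vector and the CHSH expression satisfies ⟨p, (E_{AB'} + E_{A'B} + E_{A'B'} − E_{AB}) p⟩ = 4. In particular, this quantum model violates the CHSH inequality beyond Tsirelson's bound 2√2, with value 4. -/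

import Mathlib

open scoped InnerProductSpace
open Matrix

noncomputable section

/-- `ℂ²` as a Hilbert space. -/
abbrev C2 : Type := EuclideanSpace ℂ (Fin 2)

/-- `ℂ⁴` as a Hilbert space. -/
abbrev C4 : Type := EuclideanSpace ℂ (Fin 4)

/-- Kronecker product of vectors: `(x ⊗ y)_(2i+j) = xᵢ · yⱼ`. -/
def vKron (x y : C2) : C4 :=
  (WithLp.equiv 2 (Fin 4 → ℂ)).symm fun k =>
    x (⟨k.val / 2, by omega⟩ : Fin 2) * y (⟨k.val % 2, by omega⟩ : Fin 2)

/-- Kronecker product of 2×2 matrices as a 4×4 matrix. -/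
def mKron (M N : Matrix (Fin 2) (Fin 2) ℂ) : Matrix (Fin 4) (Fin 4) ℂ :=
  Matrix.of fun i j =>
    M (⟨i.val / 2, by omega⟩ : Fin 2) (⟨j.val / 2, by omega⟩ : Fin 2) *
      N (⟨i.val % 2, by omega⟩ : Fin 2) (⟨j.val % 2, by omega⟩ : Fin 2)

/-- The rank-one matrix `u · uᴴ` (`uu*`). -/
def rankOne {n : ℕ} (u : EuclideanSpace ℂ (Fin n)) : Matrix (Fin n) (Fin n) ℂ :=
  Matrix.of fun i j => u i * star (u j)

/-- The vector `(a, b, c, d) ∈ ℂ⁴`. -/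
def vec4 (a b c d : ℂ) : C4 :=
  (WithLp.equiv 2 (Fin 4 → ℂ)).symm ![a, b, c, d]

/-- The quantum model of the nonlocal non-marginal box situation 2 violates the CHSH
inequality with the maximal algebraic value 4, beyond Tsirelson's bound `2√2`:
with `a = e^{iα}/√2`, `b = e^{iβ}/√2`, `p = (0,a,b,0)`, `w₊ = (0,a,b,0)`, `w₋ = (0,a,−b,0)`
and the expectation-value operators `E_{AB} = e₁e₁* − e₂e₂* − e₃e₃* + e₄e₄*`,
`E_{AB'} = w₊w₊* − w₋w₋* − e₁e₁* + e₄e₄*`, `E_{A'B} = w₊w₊* − e₁e₁* − w₋w₋* + e₄e₄*`,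
`E_{A'B'} = w₊w₊* − e₁e₁* − e₄e₄* + w₋w₋*`, the state `p` is a unit vector and
`⟨p, (E_{AB'} + E_{A'B} + E_{A'B'} − E_{AB}) p⟩ = 4`. -/
theorem stmt_9 (α β : ℝ) (a b : ℂ)
    (ha : a = Complex.exp (α * Complex.I) / Real.sqrt 2)
    (hb : b = Complex.exp (β * Complex.I) / Real.sqrt 2)
    (p wp wm e1 e2 e3 e4 : C4)
    (hp : p = vec4 0 a b 0) (hwp : wp = vec4 0 a b 0) (hwm : wm = vec4 0 a (-b) 0)
    (he1 : e1 = vec4 1 0 0 0) (he2 : e2 = vec4 0 1 0 0)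
    (he3 : e3 = vec4 0 0 1 0) (he4 : e4 = vec4 0 0 0 1)
    (EAB EAB' EA'B EA'B' : Matrix (Fin 4) (Fin 4) ℂ)
    (hEAB : EAB = rankOne e1 - rankOne e2 - rankOne e3 + rankOne e4)
    (hEAB' : EAB' = rankOne wp - rankOne wm - rankOne e1 + rankOne e4)
    (hEA'B : EA'B = rankOne wp - rankOne e1 - rankOne wm + rankOne e4)
    (hEA'B' : EA'B' = rankOne wp - rankOne e1 - rankOne e4 + rankOne wm) :
    ‖p‖ = 1 ∧
      ⟪p, Matrix.toEuclideanLin (EAB' + EA'B + EA'B' - EAB) p⟫_ℂ = 4 := by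

  have habs : ‖a‖ = 1 / Real.sqrt 2 := by
    rw [ha]
    rw [norm_div, Complex.norm_exp]
    simp
  have hbabs : ‖b‖ = 1 / Real.sqrt 2 := by
    rw [hb]
    rw [norm_div, Complex.norm_exp]
    simp
  have hsq : Real.sqrt 2 ^ 2 = 2 := Real.sq_sqrt (by norm_num)
  have haa : (starRingEnd ℂ) a * a = 1 / 2 := by
    rw [mul_comm, Complex.mul_conj']
    rw [habs]
    norm_cast
    rw [div_pow, one_pow, hsq]
    norm_num
  have hbb : (starRingEnd ℂ) b * b = 1 / 2 := by
    rw [mul_comm, Complex.mul_conj']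
    rw [hbabs]
    norm_cast
    rw [div_pow, one_pow, hsq]
    norm_num
  constructor
  · have : ‖p‖ ^ 2 = 1 := by
      rw [hp, ← @inner_self_eq_norm_sq ℂ]
      simp only [vec4, PiLp.inner_apply, Fin.sum_univ_four, WithLp.equiv_symm_apply, PiLp.toLp_apply]
      simp only [Matrix.cons_val_zero, Matrix.cons_val_one, Matrix.head_cons,
        Matrix.cons_val_two, Matrix.tail_cons, Matrix.cons_val_three]
      simp only [RCLike.inner_apply, map_zero, zero_mul, mul_zero]
      rw [mul_comm a, mul_comm b, haa, hbb]
      norm_num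
    nlinarith [norm_nonneg p]
  · rw [hEAB, hEAB', hEA'B, hEA'B', hp, hwp, hwm, he1, he2, he3, he4]
    simp only [vec4, rankOne, Matrix.toEuclideanLin_apply, PiLp.inner_apply,
      Fin.sum_univ_four, WithLp.equiv_symm_apply, PiLp.toLp_apply,
      Matrix.mulVec, dotProduct, Matrix.add_apply, Matrix.sub_apply,
      Matrix.of_apply, Matrix.cons_val_zero, Matrix.cons_val_one, Matrix.head_cons,
      Matrix.cons_val_two, Matrix.tail_cons, Matrix.cons_val_three,
      RCLike.inner_apply]
    simp only [star_zero, star_neg, mul_zero, zero_mul, map_zero, _root_.map_mul, map_neg,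
      Complex.conj_conj, mul_neg, neg_mul, neg_neg, zero_add, add_zero, zero_sub, sub_zero,
      mul_one, one_mul, neg_zero]
    simp only [Complex.star_def, star_one]
    ring_nf
    linear_combination (8*((starRingEnd ℂ) b*b) + 2*((starRingEnd ℂ) a*a) + 2) * haa + (2*((starRingEnd ℂ) b*b) + 6) * hbb
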